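/- If B = Φ_M T Φ_N† and C = Φ_N U Φ_K† are stripe decomposable matrices sharing the middle unitary factor Φ_N, then B C = Φ_M (T U) Φ_K†, and the product T U of two stripe matrices is again a stripe matrix. -/
import Mathlib


open Matrix

/-- Block-diagonal matrix with `K` copies of `P` on the diagonal. -/
def Phi {L : ℕ} (K : ℕ) (P : Matrix (Fin L) (Fin L) ℂ) :
    Matrix (Fin K × Fin L) (Fin K × Fin L) ℂ :=
  fun p q => if p.1 = q.1 then P p.2 q.2 else 0

/-- A stripe matrix: every `L × L` block is a diagonal matrix. -/
def IsStripe {M N L : ℕ} (S : Matrix (Fin M × Fin L) (Fin N × Fin L) ℂ) : Prop :=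
  ∀ i j, Matrix.IsDiag (fun a b => S (i, a) (j, b))

theorem stripe_mul
    {M N K L : ℕ} (PhiM : Matrix (Fin M × Fin L) (Fin M × Fin L) ℂ)
    (PhiN : Matrix (Fin N × Fin L) (Fin N × Fin L) ℂ)
    (PhiK : Matrix (Fin K × Fin L) (Fin K × Fin L) ℂ)
    (hPhiM : PhiM * PhiMᴴ = 1) (hPhiN : PhiN * PhiNᴴ = 1)
    (hPhiK : PhiK * PhiKᴴ = 1)
    (B : Matrix (Fin M × Fin L) (Fin N × Fin L) ℂ)
    (C : Matrix (Fin N × Fin L) (Fin K × Fin L) ℂ)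
    (T : Matrix (Fin M × Fin L) (Fin N × Fin L) ℂ)
    (U : Matrix (Fin N × Fin L) (Fin K × Fin L) ℂ)
    (hT : IsStripe T) (hU : IsStripe U)
    (hB : B = PhiM * T * PhiNᴴ) (hC : C = PhiN * U * PhiKᴴ) :
    B * C = PhiM * (T * U) * PhiKᴴ ∧ IsStripe (T * U) := by
  have hN : PhiNᴴ * PhiN = 1 := mul_eq_one_comm.mp hPhiN
  constructor
  · subst hB hC
    calc PhiM * T * PhiNᴴ * (PhiN * U * PhiKᴴ)
        = PhiM * T * (PhiNᴴ * PhiN) * U * PhiKᴴ := by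
          simp only [Matrix.mul_assoc]
      _ = PhiM * (T * U) * PhiKᴴ := by rw [hN]; simp [Matrix.mul_assoc]
  · intro i j a b hab
    show (T * U) (i, a) (j, b) = 0
    rw [Matrix.mul_apply]
    apply Finset.sum_eq_zero
    rintro ⟨n, c⟩ -
    rcases eq_or_ne a c with rfl | hac
    · exact mul_eq_zero_of_right _ (hU n j hab)
    · exact mul_eq_zero_of_left (hT i n hac) _
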